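/- Let H be a real inner product space, S₁ and S₂ finite-dimensional subspaces of H with orthogonal projections P₁ and P₂, and let c := sup over nonzero s₁ ∈ S₁ and nonzero s₂ ∈ S₂ of |⟨s₁, s₂⟩| / (‖s₁‖ ‖s₂‖). Then for every e ∈ S₁ + S₂ with ⟨e, s⟩ = 0 for all s ∈ S₂, the error after one full block Gauss–Seidel sweep satisfies ‖(e − P₁ e) − P₂(e − P₁ e)‖ ≤ c² ‖e‖. -/

import Mathlib

open scoped RealInnerProductSpace
set_option maxHeartbeats 1000000

theorem key_angle {H : Type*} [NormedAddCommGroup H] [InnerProductSpace ℝ H]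
    (S₁ S₂ : Submodule ℝ H) [FiniteDimensional ℝ S₁] [FiniteDimensional ℝ S₂]
    (c : ℝ) (hc0 : 0 ≤ c)
    (hC : ∀ s₁ ∈ S₁, ∀ s₂ ∈ S₂, |(⟪s₁, s₂⟫ : ℝ)| ≤ c * (‖s₁‖ * ‖s₂‖))
    (x y : H) (hx : x ∈ S₁ ⊔ S₂) (hy : y ∈ S₁ ⊔ S₂)
    (hx1 : ∀ s ∈ S₁, ⟪x, s⟫ = 0) (hy2 : ∀ s ∈ S₂, ⟪y, s⟫ = 0) :
    |⟪x, y⟫| ≤ c * (‖x‖ * ‖y‖) := by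
  rcases eq_or_ne x 0 with rfl | hx0
  · simp
  rcases eq_or_ne y 0 with rfl | hy0
  · simp
  set W : Submodule ℝ H := S₁ ⊔ S₂ with hWdef
  haveI : FiniteDimensional ℝ W := Submodule.finiteDimensional_sup S₁ S₂
  set A : Submodule ℝ H := W ⊓ S₁ᗮ with hAdef
  set B : Submodule ℝ H := W ⊓ S₂ᗮ with hBdef
  haveI : FiniteDimensional ℝ A := Submodule.finiteDimensional_of_le inf_le_left
  haveI : FiniteDimensional ℝ B := Submodule.finiteDimensional_of_le inf_le_left
  have hxA : x ∈ A := ⟨hx, (Submodule.mem_orthogonal' S₁ x).2 hx1⟩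
  have hyB : y ∈ B := ⟨hy, (Submodule.mem_orthogonal' S₂ y).2 hy2⟩
  -- A ∩ B = 0
  have hAB : ∀ a : H, a ∈ A → a ∈ B → a = 0 := by
    rintro a ⟨haW, ha1⟩ ⟨-, ha2⟩
    obtain ⟨u, hu, v, hv, huv⟩ := Submodule.mem_sup.1 haW
    have h1 : ⟪a, u⟫ = 0 := (Submodule.mem_orthogonal' S₁ a).1 ha1 u hu
    have h2 : ⟪a, v⟫ = 0 := (Submodule.mem_orthogonal' S₂ a).1 ha2 v hv
    have : (⟪a, a⟫ : ℝ) = ⟪a, u⟫ + ⟪a, v⟫ := by rw [← inner_add_right, huv]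
    rw [h1, h2] at this
    simp at this
    exact this
  -- compact set and max
  set D : Set (A × B) := Metric.sphere 0 1 ×ˢ Metric.sphere 0 1 with hDdef
  have hDc : IsCompact D := (isCompact_sphere _ _).prod (isCompact_sphere _ _)
  set f : A × B → ℝ := fun p => ⟪(p.1 : H), (p.2 : H)⟫ with hfdef
  have hf : Continuous f :=
    (continuous_subtype_val.comp continuous_fst).inner (continuous_subtype_val.comp continuous_snd)
  have hunit : ∀ (z : H) (hz : z ≠ 0) (C : Submodule ℝ H) (hzC : z ∈ C),
      (‖z‖⁻¹ • (⟨z, hzC⟩ : C)) ∈ Metric.sphere (0 : C) 1 := by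
    intro z hz C hzC
    rw [mem_sphere_zero_iff_norm, norm_smul, norm_inv, norm_norm]
    show ‖z‖⁻¹ * ‖z‖ = 1
    exact inv_mul_cancel₀ (norm_ne_zero_iff.2 hz)
  have hne : D.Nonempty :=
    ⟨(‖x‖⁻¹ • (⟨x, hxA⟩ : A), ‖y‖⁻¹ • (⟨y, hyB⟩ : B)), hunit x hx0 A hxA, hunit y hy0 B hyB⟩
  obtain ⟨⟨x₀, y₀⟩, hpD, hpmax⟩ := hDc.exists_isMaxOn hne hf.continuousOn
  set F : ℝ := ⟪(x₀ : H), (y₀ : H)⟫ with hFdef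
  have hx₀ : ‖(x₀ : H)‖ = 1 := by
    have := hpD.1; simpa [mem_sphere_zero_iff_norm] using this
  have hy₀ : ‖(y₀ : H)‖ = 1 := by
    have := hpD.2; simpa [mem_sphere_zero_iff_norm] using this
  have hF0 : 0 ≤ F := by
    have hmem : ((x₀, -y₀) : A × B) ∈ D := by
      refine ⟨hpD.1, ?_⟩
      simpa [mem_sphere_zero_iff_norm] using hpD.2
    have h := hpmax hmem
    have h' : f (x₀, -y₀) ≤ f (x₀, y₀) := h
    simp only [f, NegMemClass.coe_neg, inner_neg_right] at h'
    linarith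
  -- claim1
  have claim1 : ∀ a ∈ A, ∀ b ∈ B, ⟪a, b⟫ ≤ F * (‖a‖ * ‖b‖) := by
    intro a ha b hb
    rcases eq_or_ne a 0 with rfl | ha0
    · simp
    rcases eq_or_ne b 0 with rfl | hb0
    · simp
    have hna : (0:ℝ) < ‖a‖ := norm_pos_iff.2 ha0
    have hnb : (0:ℝ) < ‖b‖ := norm_pos_iff.2 hb0
    have hmem : ((‖a‖⁻¹ • (⟨a, ha⟩ : A), ‖b‖⁻¹ • (⟨b, hb⟩ : B)) : A × B) ∈ D :=
      ⟨hunit a ha0 A ha, hunit b hb0 B hb⟩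
    have hkey : f (‖a‖⁻¹ • (⟨a, ha⟩ : A), ‖b‖⁻¹ • (⟨b, hb⟩ : B)) ≤ f (x₀, y₀) := hpmax hmem
    simp only [f, Submodule.coe_smul, real_inner_smul_left, real_inner_smul_right] at hkey
    have h2 : (‖a‖ * ‖b‖) * (‖b‖⁻¹ * (‖a‖⁻¹ * ⟪a, b⟫)) ≤ (‖a‖ * ‖b‖) * F :=
      mul_le_mul_of_nonneg_left hkey (by positivity)
    have h3 : (‖a‖ * ‖b‖) * (‖b‖⁻¹ * (‖a‖⁻¹ * ⟪a, b⟫)) = ⟪a, b⟫ := by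
      field_simp
    rw [h3] at h2
    linarith
  -- the heart : F ≤ c
  have hSW1 : S₁ ≤ W := le_sup_left
  have hSW2 : S₂ ≤ W := le_sup_right
  have hFc : F ≤ c := by
    set a : H := (x₀ : H) with hadef
    set b : H := (y₀ : H) with hbdef
    have haA : a ∈ A := x₀.2
    have hbB : b ∈ B := y₀.2
    set Pa : H := (Submodule.orthogonalProjection S₂ a : H) with hPa
    set Pb : H := (Submodule.orthogonalProjection S₁ b : H) with hPb
    have hPaS : Pa ∈ S₂ := SetLike.coe_mem _
    have hPbS : Pb ∈ S₁ := SetLike.coe_mem _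
    set a' : H := a - Pa with ha'
    set b' : H := b - Pb with hb'
    have ha'o : a' ∈ S₂ᗮ := Submodule.sub_starProjection_mem_orthogonal (K := S₂) a
    have hb'o : b' ∈ S₁ᗮ := Submodule.sub_starProjection_mem_orthogonal (K := S₁) b
    have ha'B : a' ∈ B := ⟨sub_mem haA.1 (hSW2 hPaS), ha'o⟩
    have hb'A : b' ∈ A := ⟨sub_mem hbB.1 (hSW1 hPbS), hb'o⟩
    -- decomposition
    have h1 : ⟪a, Pb⟫ = 0 := (Submodule.mem_orthogonal' S₁ a).1 haA.2 Pb hPbS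
    have h2 : ⟪Pa, b⟫ = 0 := by
      rw [real_inner_comm]; exact (Submodule.mem_orthogonal' S₂ b).1 hbB.2 Pa hPaS
    have hdec : F = ⟪a', b'⟫ - ⟪Pa, Pb⟫ := by
      simp only [ha', hb', inner_sub_left, inner_sub_right]
      rw [h1, h2]; simp [hFdef, hadef, hbdef]
    -- Pythagoras
    have hpa : ⟪a', Pa⟫ = 0 := (Submodule.mem_orthogonal' S₂ a').1 ha'o Pa hPaS
    have hpb : ⟪b', Pb⟫ = 0 := (Submodule.mem_orthogonal' S₁ b').1 hb'o Pb hPbS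
    have hpya : ‖a‖^2 = ‖a'‖^2 + ‖Pa‖^2 := by
      have : a = a' + Pa := by rw [ha']; abel
      rw [this, norm_add_sq_real, hpa]; ring
    have hpyb : ‖b‖^2 = ‖b'‖^2 + ‖Pb‖^2 := by
      have : b = b' + Pb := by rw [hb']; abel
      rw [this, norm_add_sq_real, hpb]; ring
    set α : ℝ := ‖Pa‖
    set β : ℝ := ‖Pb‖
    set s : ℝ := ‖a'‖
    set t : ℝ := ‖b'‖
    have hα0 : 0 ≤ α := norm_nonneg _
    have hβ0 : 0 ≤ β := norm_nonneg _
    have hs0 : 0 ≤ s := norm_nonneg _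
    have ht0 : 0 ≤ t := norm_nonneg _
    have hsa : s^2 + α^2 = 1 := by rw [← hpya, hx₀, one_pow]
    have htb : t^2 + β^2 = 1 := by rw [← hpyb, hy₀, one_pow]
    have hαpos : 0 < α := by
      rcases hα0.lt_or_eq with h | h
      · exact h
      · exfalso
        have hPa0 : Pa = 0 := by rwa [eq_comm, norm_eq_zero] at h
        have : a ∈ B := by
          have : a' = a := by rw [ha', hPa0, sub_zero]
          rwa [this] at ha'B
        have h0 := hAB a haA this
        rw [h0] at hx₀; simp at hx₀
    have hβpos : 0 < β := by
      rcases hβ0.lt_or_eq with h | h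
      · exact h
      · exfalso
        have hPb0 : Pb = 0 := by rwa [eq_comm, norm_eq_zero] at h
        have : b ∈ A := by
          have : b' = b := by rw [hb', hPb0, sub_zero]
          rwa [this] at hb'A
        have h0 := hAB b this hbB
        rw [h0] at hy₀; simp at hy₀
    -- estimates
    have e1 : ⟪a', b'⟫ ≤ F * (t * s) := by
      have := claim1 b' hb'A a' ha'B
      rwa [real_inner_comm] at this
    have e2 : -⟪Pa, Pb⟫ ≤ c * (α * β) := by
      have h := hC Pb hPbS Pa hPaS
      rw [real_inner_comm] at h
      nlinarith [neg_abs_le ((⟪Pa, Pb⟫ : ℝ)), h]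
    have Fineq : F ≤ F * (t * s) + c * (α * β) := by linarith [hdec, e1, e2]
    have hts : α * β + t * s ≤ 1 := by
      nlinarith [sq_nonneg (α - β), sq_nonneg (α*t - β*s), mul_nonneg ht0 hs0,
        mul_nonneg hαpos.le hβpos.le, sq_nonneg (α*β + t*s), sq_nonneg (1 - α*β - t*s),
        sq_nonneg (1 - α*β + t*s)]
    have h4 : F * (α * β) ≤ F * (1 - t * s) := mul_le_mul_of_nonneg_left (by linarith) hF0
    have h5 : F * (1 - t * s) ≤ c * (α * β) := by nlinarith [Fineq]
    have h6 : F * (α * β) ≤ c * (α * β) := le_trans h4 h5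
    exact le_of_mul_le_mul_right h6 (mul_pos hαpos hβpos)
  -- conclude
  have c1 := claim1 x hxA y hyB
  have c2 : -⟪x, y⟫ ≤ F * (‖x‖ * ‖y‖) := by
    have := claim1 (-x) (neg_mem hxA) y hyB
    rwa [inner_neg_left, norm_neg] at this
  have hnn : (0:ℝ) ≤ ‖x‖ * ‖y‖ := by positivity
  rw [abs_le]
  constructor
  · nlinarith [c2, mul_le_mul_of_nonneg_right hFc hnn]
  · nlinarith [c1, mul_le_mul_of_nonneg_right hFc hnn]


theorem stmt_17
    {H : Type*} [NormedAddCommGroup H] [InnerProductSpace ℝ H]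
    (S₁ S₂ : Submodule ℝ H) [FiniteDimensional ℝ S₁] [FiniteDimensional ℝ S₂]
    (c : ℝ)
    (hc : c = ⨆ p : {x : H // x ∈ S₁ ∧ x ≠ 0} × {y : H // y ∈ S₂ ∧ y ≠ 0},
        |⟪(p.1 : H), (p.2 : H)⟫| / (‖(p.1 : H)‖ * ‖(p.2 : H)‖))
    (e : H) (he : e ∈ S₁ ⊔ S₂) (heperp : ∀ s ∈ S₂, ⟪e, s⟫ = 0) :
    ‖(e - Submodule.orthogonalProjection S₁ e)
        - Submodule.orthogonalProjection S₂ (e - Submodule.orthogonalProjection S₁ e)‖ ≤ c ^ 2 * ‖e‖ := by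
  have hc0 : 0 ≤ c := by
    rw [hc]
    exact Real.iSup_nonneg fun p => div_nonneg (abs_nonneg _) (by positivity)
  have hbdd : BddAbove (Set.range fun p : {x : H // x ∈ S₁ ∧ x ≠ 0} × {y : H // y ∈ S₂ ∧ y ≠ 0} =>
      |⟪(p.1 : H), (p.2 : H)⟫| / (‖(p.1 : H)‖ * ‖(p.2 : H)‖)) := by
    refine ⟨1, ?_⟩
    rintro r ⟨p, rfl⟩
    exact div_le_one_of_le₀ (abs_real_inner_le_norm _ _) (by positivity)
  have hC : ∀ s₁ ∈ S₁, ∀ s₂ ∈ S₂, |(⟪s₁, s₂⟫ : ℝ)| ≤ c * (‖s₁‖ * ‖s₂‖) := by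
    intro s₁ h1 s₂ h2
    rcases eq_or_ne s₁ 0 with rfl | hs1
    · simp
    rcases eq_or_ne s₂ 0 with rfl | hs2
    · simp
    have hle := le_ciSup hbdd
      ((⟨⟨s₁, h1, hs1⟩, ⟨s₂, h2, hs2⟩⟩ : {x : H // x ∈ S₁ ∧ x ≠ 0} × {y : H // y ∈ S₂ ∧ y ≠ 0}))
    rw [← hc] at hle
    have hpos : (0:ℝ) < ‖s₁‖ * ‖s₂‖ := mul_pos (norm_pos_iff.2 hs1) (norm_pos_iff.2 hs2)
    calc |(⟪s₁, s₂⟫ : ℝ)| = (|(⟪s₁, s₂⟫ : ℝ)| / (‖s₁‖ * ‖s₂‖)) * (‖s₁‖ * ‖s₂‖) := by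
          field_simp
      _ ≤ c * (‖s₁‖ * ‖s₂‖) := mul_le_mul_of_nonneg_right hle hpos.le
  set u : H := e - Submodule.orthogonalProjection S₁ e with hu
  set v : H := u - Submodule.orthogonalProjection S₂ u with hv
  have huW : u ∈ S₁ ⊔ S₂ :=
    Submodule.sub_mem _ he ((le_sup_left : S₁ ≤ S₁ ⊔ S₂) (SetLike.coe_mem _))
  have hu1 : ∀ s ∈ S₁, (⟪u, s⟫ : ℝ) = 0 := fun s hs =>
    (Submodule.mem_orthogonal' S₁ u).1 (Submodule.sub_starProjection_mem_orthogonal (K := S₁) e) s hs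
  have hvW : v ∈ S₁ ⊔ S₂ :=
    Submodule.sub_mem _ huW ((le_sup_right : S₂ ≤ S₁ ⊔ S₂) (SetLike.coe_mem _))
  have hv2 : ∀ s ∈ S₂, (⟪v, s⟫ : ℝ) = 0 := fun s hs =>
    (Submodule.mem_orthogonal' S₂ v).1 (Submodule.sub_starProjection_mem_orthogonal (K := S₂) u) s hs
  have step1 := key_angle S₁ S₂ c hc0 hC u e huW he hu1 heperp
  have hue : (⟪u, e⟫ : ℝ) = ‖u‖^2 := by
    have h0 : (⟪u, ((Submodule.orthogonalProjection S₁ e : S₁) : H)⟫ : ℝ) = 0 :=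
      hu1 _ (SetLike.coe_mem _)
    have h4 : e = u + ((Submodule.orthogonalProjection S₁ e : S₁) : H) := by rw [hu]; abel
    rw [h4, inner_add_right, h0, real_inner_self_eq_norm_sq]
    ring
  have hnu : ‖u‖ ≤ c * ‖e‖ := by
    rcases eq_or_ne u 0 with h | h
    · rw [h]; simp; positivity
    · have hpos : 0 < ‖u‖ := norm_pos_iff.2 h
      nlinarith [step1, le_abs_self ((⟪u, e⟫ : ℝ)), hue]
  have step2 := key_angle S₁ S₂ c hc0 hC u v huW hvW hu1 hv2
  have hPv : (⟪((Submodule.orthogonalProjection S₂ u : S₂) : H), v⟫ : ℝ) = 0 := by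
    rw [real_inner_comm]; exact hv2 _ (SetLike.coe_mem _)
  have huv : (⟪u, v⟫ : ℝ) = ‖v‖^2 := by
    have h4 : u = v + ((Submodule.orthogonalProjection S₂ u : S₂) : H) := by rw [hv]; abel
    rw [h4, inner_add_left, hPv, real_inner_self_eq_norm_sq]
    ring
  rcases eq_or_ne v 0 with h | h
  · rw [h]; simp; positivity
  have hpv : 0 < ‖v‖ := norm_pos_iff.2 h
  have h5 : ‖v‖ ≤ c * ‖u‖ := by
    nlinarith [step2, le_abs_self ((⟪u, v⟫ : ℝ)), huv]
  calc ‖v‖ ≤ c * ‖u‖ := h5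
    _ ≤ c * (c * ‖e‖) := mul_le_mul_of_nonneg_left hnu hc0
    _ = c ^ 2 * ‖e‖ := by ring
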